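/- If u : ℤ → ℝ is strictly monotone, satisfies the K=4 cross-ratio scheme, and the first integrals J₁(m) ≡ A ≠ 0 and J₂(m) ≡ B are constant, then u(m) = 1/(C₁m + C₂) + C₃ for suitable constants C₁ ≠ 0, C₂, C₃ determined by A and B. -/

import Mathlib

theorem key (A : ℝ) (hA : A ≠ 0) (a b c : ℝ) (hab : a < b) (hbc : b < c)
    (h1 : 4/(c-a) - 1/(c-b) - 1/(b-a) = A)
    (h2 : 4*c/(c-a) - b/(c-b) - b/(b-a) = 2) :
    b ≠ 0 ∧ c ≠ 0 ∧ 1/c = 1/b + A/2 := by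
  have hba : b - a ≠ 0 := by intro h; nlinarith
  have hcb : c - b ≠ 0 := by intro h; nlinarith
  have hca : c - a ≠ 0 := by intro h; nlinarith
  field_simp at h1 h2
  have hq1 : ((b-a)*(c-b)) * (4*(c-b) - (c-a)*(2-A*b)) = 0 := by
    linear_combination h2 - b*h1
  have hQ1 : 4*(c-b) = (c-a)*(2-A*b) := by
    rcases mul_eq_zero.mp hq1 with h | h
    · exact absurd h (mul_ne_zero hba hcb)
    · linarith
  have hq2 : ((c-a)*(c-b)) * ((c-a) - (b-a)*(2-A*c)) = 0 := by
    linear_combination h2 - c*h1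
  have hQ2 : (c-a) = (b-a)*(2-A*c) := by
    rcases mul_eq_zero.mp hq2 with h | h
    · exact absurd h (mul_ne_zero hca hcb)
    · linarith
  have h3 : c - b = (b-a)*(1-A*c) := by linear_combination hQ2
  have h4 : 4*((b-a)*(1-A*c)) = ((b-a)*(2-A*c))*(2-A*b) := by
    rw [← h3, ← hQ2]; exact hQ1
  have h5 : (b-a)*(A*(2*(b-c) - A*(b*c))) = 0 := by linear_combination h4
  have hT : 2*(b-c) = A*(b*c) := by
    rcases mul_eq_zero.mp h5 with h | h
    · exact absurd h hba
    · rcases mul_eq_zero.mp h with h' | h'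
      · exact absurd h' hA
      · linarith
  have hb : b ≠ 0 := by intro h; subst h; nlinarith
  have hc : c ≠ 0 := by intro h; subst h; nlinarith
  refine ⟨hb, hc, ?_⟩
  field_simp
  linear_combination hT

theorem stmt_18 (u : ℤ → ℝ) (hmono : StrictMono u)
    (hscheme : ∀ m : ℤ, (u (m + 3) - u (m + 1)) * (u (m + 2) - u m)
      = 4 * ((u (m + 3) - u (m + 2)) * (u (m + 1) - u m)))
    (A B : ℝ) (hA : A ≠ 0)
    (hJ₁ : ∀ m : ℤ, 4 / (u (m + 2) - u m) - 1 / (u (m + 2) - u (m + 1))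
      - 1 / (u (m + 1) - u m) = A)
    (hJ₂ : ∀ m : ℤ, 4 * u (m + 2) / (u (m + 2) - u m)
      - u (m + 1) / (u (m + 2) - u (m + 1))
      - u (m + 1) / (u (m + 1) - u m) - 2 = B) :
    ∃ C₁ C₂ C₃ : ℝ, C₁ ≠ 0 ∧
      ∀ m : ℤ, u m = 1 / (C₁ * (m : ℝ) + C₂) + C₃ := by
  have hB : B = A * (B/A) := by field_simp
  have step : ∀ k : ℤ, (u k - B/A ≠ 0) ∧
      1/(u (k+1) - B/A) = 1/(u k - B/A) + A/2 := by
    intro k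
    have e1 := hJ₁ (k-1)
    have e2 := hJ₂ (k-1)
    rw [show k-1+1 = k from by ring, show k-1+2 = k+1 from by ring] at e1 e2
    have hab : u (k-1) - B/A < u k - B/A := by
      have := hmono (show k-1 < k by omega); linarith
    have hbc : u k - B/A < u (k+1) - B/A := by
      have := hmono (show k < k+1 by omega); linarith
    have h1 : 4/((u (k+1) - B/A) - (u (k-1) - B/A))
        - 1/((u (k+1) - B/A) - (u k - B/A))
        - 1/((u k - B/A) - (u (k-1) - B/A)) = A := by
      linear_combination e1
    have h2 : 4*(u (k+1) - B/A)/((u (k+1) - B/A) - (u (k-1) - B/A))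
        - (u k - B/A)/((u (k+1) - B/A) - (u k - B/A))
        - (u k - B/A)/((u k - B/A) - (u (k-1) - B/A)) = 2 := by
      linear_combination e2 - (B/A) * e1 + hB
    obtain ⟨hb, hc, heq⟩ := key A hA _ _ _ hab hbc h1 h2
    exact ⟨hb, heq⟩
  have zlin : ∀ k : ℤ, 1/(u k - B/A) = A/2 * (k : ℝ) + 1/(u 0 - B/A) := by
    intro k
    induction k using Int.induction_on with
    | zero => simp
    | succ n ih =>
      rw [(step n).2, ih]; push_cast; ring
    | pred n ih =>
      have h := (step (-(n:ℤ)-1)).2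
      rw [show (-(n:ℤ)-1)+1 = -(n:ℤ) from by ring] at h
      rw [ih] at h
      push_cast at h ⊢
      linarith
  refine ⟨A/2, 1/(u 0 - B/A), B/A, by simpa using hA, fun m => ?_⟩
  have hz := zlin m
  have hne := (step m).1
  rw [← hz, one_div_one_div]
  ring
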